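/- Over Z/2, for n ≡ 0 mod 4, the 2-cochain v(n) := Σ_{r=0}^{n/4} e_{n/2 − 2r − 1} ∧ e_{n/2 + 2r + 1} is a cocycle of the Chevalley–Eilenberg complex of L_{−1} = W(Z/2), i.e., δ_{−1}(v(n)) = 0. -/

import Mathlib

set_option maxHeartbeats 1000000
set_option synthInstance.maxHeartbeats 1000000

noncomputable section

/-- Ground field `Z/2`. -/
abbrev K2 := ZMod 2

/-- The free `Z/2`-module on basis `(e_i)_{i ≥ -1}` (underlying `W(Z/2) = L_{-1}`). -/
abbrev Vm := {i : ℤ // -1 ≤ i} →₀ K2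

/-- The exterior algebra of cochains of `L_{-1}`. -/
abbrev Lamm := ExteriorAlgebra K2 Vm

/-- The generator `e_i`, `i ≥ -1` (defined to be `0` for irrelevant `i < -1`). -/
noncomputable def Em (i : ℤ) : Lamm :=
  if h : -1 ≤ i then ExteriorAlgebra.ι K2 (Finsupp.single (⟨i, h⟩ : {i : ℤ // -1 ≤ i}) 1)
  else 0

/-- `δ₋₁(e_i) = Σ_{c+d=i, −1 ≤ c < d} (c+d) e_c ∧ e_d`, coefficients mod 2. -/
noncomputable def δm (i : ℤ) : Lamm :=
  ∑ c ∈ Finset.Icc (-1 : ℤ) i, if c < i - c then (i : K2) • (Em c * Em (i - c)) else 0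

lemma char2 (x : Lamm) : x + x = 0 := by
  have h := two_smul K2 x
  rw [show (2 : K2) = 0 by decide, zero_smul] at h
  exact h.symm

lemma Em_mul_self (i : ℤ) : Em i * Em i = 0 := by
  unfold Em; split
  · exact ExteriorAlgebra.ι_sq_zero _
  · simp

lemma Em_mul_comm (i j : ℤ) : Em i * Em j = Em j * Em i := by
  by_cases hi : -1 ≤ i
  · by_cases hj : -1 ≤ j
    · have h : Em i * Em j + Em j * Em i = 0 := by
        unfold Em
        rw [dif_pos hi, dif_pos hj]
        exact ExteriorAlgebra.ι_add_mul_swap (R := K2) (M := Vm) _ _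
      have h2 := char2 (Em j * Em i)
      calc Em i * Em j = -(Em j * Em i) := eq_neg_of_add_eq_zero_left h
        _ = Em j * Em i := neg_eq_of_add_eq_zero_left h2
    · unfold Em; rw [dif_neg hj]; simp
  · unfold Em; rw [dif_neg hi]; simp

/-- Ordered triple product of generators. -/
noncomputable def Tm (x y z : ℤ) : Lamm := Em x * Em y * Em z

lemma Tm_swap12 (x y z : ℤ) : Tm x y z = Tm y x z := by
  unfold Tm; rw [Em_mul_comm]

lemma Tm_swap23 (x y z : ℤ) : Tm x y z = Tm x z y := by
  unfold Tm; rw [mul_assoc, Em_mul_comm y z, ← mul_assoc]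

lemma Tm_rot (x y z : ℤ) : Tm x y z = Tm z x y := by
  rw [Tm_swap23, Tm_swap12]

lemma Tm_swap13 (x y z : ℤ) : Tm x y z = Tm z y x := by
  rw [Tm_rot, Tm_swap23]

lemma Tm_zero12 (x z : ℤ) : Tm x x z = 0 := by
  unfold Tm; rw [Em_mul_self, zero_mul]

lemma Tm_zero13 (x y : ℤ) : Tm x y x = 0 := by
  rw [Tm_rot, Tm_zero12]

lemma Tm_zero23 (x y : ℤ) : Tm x y y = 0 := by
  rw [Tm_swap12, Tm_zero13]

/-- The generic term of the expanded coboundary: for `p = (k, c)`, the distinguished odd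
index is `d = 2k - 1`, and the term is `e_c ∧ e_{n-d-c} ∧ e_d` when `c < n - d - c`. -/
noncomputable def Fm (n : ℤ) (p : ℕ × ℤ) : Lamm :=
  if p.2 < n - (2*(p.1:ℤ)-1) - p.2
    then Tm p.2 (n - (2*(p.1:ℤ)-1) - p.2) (2*(p.1:ℤ)-1) else 0

/-- The cancelling involution: swap the roles of the distinguished odd index and the other
odd index of the triple. -/
def gm (n : ℤ) (p : ℕ × ℤ) : ℕ × ℤ :=
  if p.2 < n - (2*(p.1:ℤ)-1) - p.2 then
    (if p.2 % 2 = 1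
      then (((p.2+1)/2).toNat, min (n - (2*(p.1:ℤ)-1) - p.2) (2*(p.1:ℤ)-1))
      else (((n - (2*(p.1:ℤ)-1) - p.2 + 1)/2).toNat, min p.2 (2*(p.1:ℤ)-1)))
  else p

/-- Partial sums of `Fm` over the second coordinate. -/
noncomputable def Hm (n : ℤ) (k : ℕ) : Lamm :=
  ∑ c ∈ Finset.Icc (-1 : ℤ) (n+1),
    if c < n - (2*(k:ℤ)-1) - c then Tm c (n - (2*(k:ℤ)-1) - c) (2*(k:ℤ)-1) else 0

lemma gm_F (n : ℤ) (hn2 : n % 2 = 0) (k : ℕ) (c : ℤ) (hc : -1 ≤ c) :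
    Fm n (gm n (k, c)) = Fm n (k, c) := by
  by_cases hlt : c < n - (2*(k:ℤ)-1) - c
  · by_cases hodd : c % 2 = 1
    · have hg : gm n (k, c) = (((c+1)/2).toNat,
          min (n - (2*(k:ℤ)-1) - c) (2*(k:ℤ)-1)) := by
        simp only [gm, hlt, hodd, if_true, if_pos]
      rw [hg]
      set e : ℤ := n - (2*(k:ℤ)-1) - c with he
      set d : ℤ := 2*(k:ℤ)-1 with hd
      have h1 : (2*((((c+1)/2).toNat : ℕ) : ℤ) - 1) = c := by omega
      simp only [Fm, h1]
      have h2 : n - c - min e d = max e d := by omega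
      rw [h2]
      have hne : e ≠ d := by omega
      rw [if_pos (by omega : min e d < max e d), if_pos hlt]
      rcases le_or_gt e d with h | h
      · rw [min_eq_left h, max_eq_right h, Tm_rot]
      · rw [min_eq_right h.le, max_eq_left h.le, Tm_swap13]
    · have hg : gm n (k, c) = (((n - (2*(k:ℤ)-1) - c + 1)/2).toNat,
          min c (2*(k:ℤ)-1)) := by
        simp only [gm, hlt, hodd, if_true, if_neg, ite_false, if_pos]
      rw [hg]
      set e : ℤ := n - (2*(k:ℤ)-1) - c with he
      set d : ℤ := 2*(k:ℤ)-1 with hd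
      have h1 : (2*((((e+1)/2).toNat : ℕ) : ℤ) - 1) = e := by omega
      simp only [Fm, h1]
      have h2 : n - e - min c d = max c d := by omega
      rw [h2]
      have hne : c ≠ d := by omega
      rw [if_pos (by omega : min c d < max c d), if_pos hlt]
      rcases le_or_gt c d with h | h
      · rw [min_eq_left h, max_eq_right h, Tm_swap23]
      · rw [min_eq_right h.le, max_eq_left h.le, Tm_swap12, Tm_swap23]
  · have hg : gm n (k, c) = (k, c) := by simp only [gm, hlt, if_false, ite_false]
    rw [hg]

lemma gm_fix (n : ℤ) (hn2 : n % 2 = 0) (k : ℕ) (c : ℤ) (hc : -1 ≤ c)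
    (hfix : gm n (k, c) = (k, c)) : Fm n (k, c) = 0 := by
  by_cases hlt : c < n - (2*(k:ℤ)-1) - c
  · set e : ℤ := n - (2*(k:ℤ)-1) - c with he
    set d : ℤ := 2*(k:ℤ)-1 with hd
    by_cases hodd : c % 2 = 1
    · have hg : gm n (k, c) = (((c+1)/2).toNat, min e d) := by
        simp only [gm, if_pos (show c < n - (2*(k:ℤ)-1) - c from hlt), hodd, if_true, if_pos, he, hd]
      rw [hg] at hfix
      have h2 : min e d = c := congrArg Prod.snd hfix
      have hcd : c = d := by omega
      simp only [Fm, ← he, ← hd, hcd]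
      simp [Tm_zero13]
    · have hg : gm n (k, c) = (((e+1)/2).toNat, min c d) := by
        simp only [gm, if_pos (show c < n - (2*(k:ℤ)-1) - c from hlt), hodd, if_true, if_neg, ite_false, if_pos, he, hd]
      rw [hg] at hfix
      have h2 : ((e+1)/2).toNat = k := congrArg Prod.fst hfix
      have hed : e = d := by omega
      simp only [Fm, ← he, ← hd, hed]
      simp [Tm_zero23]
  · simp only [Fm, if_neg hlt]

lemma gm_mem (n : ℤ) (hn2 : n % 2 = 0) (k : ℕ) (c : ℤ)
    (hk : 2*(k:ℤ) - 1 ≤ n + 1) (hc : -1 ≤ c) (hcn : c ≤ n + 1) :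
    2*(((gm n (k, c)).1 : ℕ) : ℤ) - 1 ≤ n + 1 ∧ -1 ≤ (gm n (k, c)).2 ∧ (gm n (k, c)).2 ≤ n + 1 := by
  by_cases hlt : c < n - (2*(k:ℤ)-1) - c
  · set e : ℤ := n - (2*(k:ℤ)-1) - c with he
    set d : ℤ := 2*(k:ℤ)-1 with hd
    by_cases hodd : c % 2 = 1
    · have hg : gm n (k, c) = (((c+1)/2).toNat, min e d) := by
        simp only [gm, if_pos (show c < n - (2*(k:ℤ)-1) - c from hlt), hodd, if_true, if_pos, he, hd]
      rw [hg]
      refine ⟨by simp only; omega, by simp only; omega, by simp only; omega⟩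
    · have hg : gm n (k, c) = (((e+1)/2).toNat, min c d) := by
        simp only [gm, if_pos (show c < n - (2*(k:ℤ)-1) - c from hlt), hodd, if_true, if_neg, ite_false, if_pos, he, hd]
      rw [hg]
      refine ⟨by simp only; omega, by simp only; omega, by simp only; omega⟩
  · have hg : gm n (k, c) = (k, c) := by simp only [gm, hlt, if_false, ite_false]
    rw [hg]
    exact ⟨hk, hc, hcn⟩

lemma gm_invol (n : ℤ) (hn2 : n % 2 = 0) (k : ℕ) (c : ℤ) (hc : -1 ≤ c) :
    gm n (gm n (k, c)) = (k, c) := by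
  by_cases hlt : c < n - (2*(k:ℤ)-1) - c
  · set e : ℤ := n - (2*(k:ℤ)-1) - c with he
    set d : ℤ := 2*(k:ℤ)-1 with hd
    by_cases hodd : c % 2 = 1
    · have hg : gm n (k, c) = (((c+1)/2).toNat, min e d) := by
        simp only [gm, if_pos (show c < n - (2*(k:ℤ)-1) - c from hlt), hodd, if_true, if_pos, he, hd]
      rw [hg]
      have h1 : (2*((((c+1)/2).toNat : ℕ) : ℤ) - 1) = c := by omega
      have h2 : n - c - min e d = max e d := by omega
      have hne : e ≠ d := by omega
      rcases lt_or_gt_of_ne hne with h | h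
      · have hpar : ¬ (min e d) % 2 = 1 := by omega
        simp only [gm, h1, h2, hpar, if_pos (by omega : min e d < max e d), if_true,
          if_neg, ite_false]
        simp only [Prod.mk.injEq]
        constructor <;> omega
      · have hpar : (min e d) % 2 = 1 := by omega
        simp only [gm, h1, h2, hpar, if_pos (by omega : min e d < max e d), if_true]
        simp only [Prod.mk.injEq]
        constructor <;> omega
    · have hg : gm n (k, c) = (((e+1)/2).toNat, min c d) := by
        simp only [gm, if_pos (show c < n - (2*(k:ℤ)-1) - c from hlt), hodd, if_true, if_neg, ite_false, if_pos, he, hd]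
      rw [hg]
      have h1 : (2*((((e+1)/2).toNat : ℕ) : ℤ) - 1) = e := by omega
      have h2 : n - e - min c d = max c d := by omega
      have hne : c ≠ d := by omega
      rcases lt_or_gt_of_ne hne with h | h
      · have hpar : ¬ (min c d) % 2 = 1 := by omega
        simp only [gm, h1, h2, hpar, if_pos (by omega : min c d < max c d), if_true,
          if_neg, ite_false]
        simp only [Prod.mk.injEq]
        constructor <;> omega
      · have hpar : (min c d) % 2 = 1 := by omega
        simp only [gm, h1, h2, hpar, if_pos (by omega : min c d < max c d), if_true]
        simp only [Prod.mk.injEq]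
        constructor <;> omega
  · have hg : gm n (k, c) = (k, c) := by simp only [gm, hlt, if_false, ite_false]
    rw [hg, hg]

lemma Hsum (q : ℕ) : ∑ k ∈ Finset.range (2*q+2), Hm (4*(q:ℤ)) k = 0 := by
  classical
  have hstep : ∑ k ∈ Finset.range (2*q+2), Hm (4*(q:ℤ)) k
      = ∑ p ∈ (Finset.range (2*q+2)) ×ˢ (Finset.Icc (-1:ℤ) (4*(q:ℤ)+1)), Fm (4*(q:ℤ)) p := by
    rw [Finset.sum_product]
    rfl
  rw [hstep]
  have hn2 : (4*(q:ℤ)) % 2 = 0 := by omega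
  refine Finset.sum_involution (fun p _ => gm (4*(q:ℤ)) p) ?_ ?_ ?_ ?_
  · rintro ⟨k, c⟩ ha
    simp only [Finset.mem_product, Finset.mem_range, Finset.mem_Icc] at ha
    rw [gm_F _ hn2 k c ha.2.1]
    exact char2 _
  · rintro ⟨k, c⟩ ha h0 heq
    simp only [Finset.mem_product, Finset.mem_range, Finset.mem_Icc] at ha
    exact h0 (gm_fix _ hn2 k c ha.2.1 heq)
  · rintro ⟨k, c⟩ ha
    simp only [Finset.mem_product, Finset.mem_range, Finset.mem_Icc] at ha ⊢
    have hmem := gm_mem (4*(q:ℤ)) hn2 k c (by omega) ha.2.1 ha.2.2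
    refine ⟨by omega, hmem.2.1, hmem.2.2⟩
  · rintro ⟨k, c⟩ ha
    simp only [Finset.mem_product, Finset.mem_range, Finset.mem_Icc] at ha
    exact gm_invol _ hn2 k c ha.2.1

lemma delta_odd (i : ℤ) (hi : i % 2 = 1) :
    δm i = ∑ c ∈ Finset.Icc (-1:ℤ) i, if c < i - c then Em c * Em (i - c) else 0 := by
  have h1 : (i : K2) = 1 := by
    have h := (ZMod.intCast_eq_intCast_iff i 1 2).mpr (show i % 2 = 1 % 2 by omega)
    simpa using h
  unfold δm
  refine Finset.sum_congr rfl fun c _ => ?_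
  rw [h1, one_smul]

lemma prodA (q r : ℕ) (hr : r ≤ q) :
    δm (2*(q:ℤ) - 2*r - 1) * Em (2*(q:ℤ) + 2*r + 1) = Hm (4*(q:ℤ)) (q+1+r) := by
  set a : ℤ := 2*(q:ℤ) - 2*r - 1 with ha
  set b : ℤ := 2*(q:ℤ) + 2*r + 1 with hb
  set n : ℤ := 4*(q:ℤ) with hn
  rw [delta_odd a (by omega), Finset.sum_mul]
  have hsub : Finset.Icc (-1:ℤ) a ⊆ Finset.Icc (-1:ℤ) (n+1) :=
    Finset.Icc_subset_Icc_right (by omega)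
  rw [show (∑ c ∈ Finset.Icc (-1:ℤ) a, (if c < a - c then Em c * Em (a - c) else 0) * Em b)
      = ∑ c ∈ Finset.Icc (-1:ℤ) a, (if c < a - c then Tm c (a-c) b else 0) from
    Finset.sum_congr rfl fun c _ => by rw [ite_mul, zero_mul]; rfl]
  rw [Finset.sum_subset hsub (fun c hc hnc => by
    simp only [Finset.mem_Icc] at hc hnc
    rw [if_neg (by omega)])]
  unfold Hm
  refine Finset.sum_congr rfl fun c _ => ?_
  have h1 : 2*(((q+1+r : ℕ)) : ℤ) - 1 = b := by push_cast; ring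
  rw [h1, show n - b - c = a - c by omega]

lemma prodB (q r : ℕ) (hr : r ≤ q) :
    Em (2*(q:ℤ) - 2*r - 1) * δm (2*(q:ℤ) + 2*r + 1) = Hm (4*(q:ℤ)) (q-r) := by
  set a : ℤ := 2*(q:ℤ) - 2*r - 1 with ha
  set b : ℤ := 2*(q:ℤ) + 2*r + 1 with hb
  set n : ℤ := 4*(q:ℤ) with hn
  rw [delta_odd b (by omega), Finset.mul_sum]
  have hsub : Finset.Icc (-1:ℤ) b ⊆ Finset.Icc (-1:ℤ) (n+1) :=
    Finset.Icc_subset_Icc_right (by omega)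
  rw [show (∑ c ∈ Finset.Icc (-1:ℤ) b, Em a * (if c < b - c then Em c * Em (b - c) else 0))
      = ∑ c ∈ Finset.Icc (-1:ℤ) b, (if c < b - c then Tm c (b-c) a else 0) from
    Finset.sum_congr rfl fun c _ => by
      rw [mul_ite, mul_zero, Tm_rot]
      unfold Tm
      rw [mul_assoc]]
  rw [Finset.sum_subset hsub (fun c hc hnc => by
    simp only [Finset.mem_Icc] at hc hnc
    rw [if_neg (by omega)])]
  unfold Hm
  refine Finset.sum_congr rfl fun c _ => ?_
  have h1 : 2*(((q-r : ℕ)) : ℤ) - 1 = a := by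
    have : ((q-r : ℕ) : ℤ) = (q:ℤ) - r := by omega
    rw [this]; ring
  rw [h1, show n - a - c = b - c by omega]

/-- over `Z/2`, for `n ≡ 0 (mod 4)`, the 2-cochain
`v(n) = Σ_{r=0}^{n/4} e_{n/2−2r−1} ∧ e_{n/2+2r+1}` is a cocycle of the
Chevalley–Eilenberg complex of `L_{−1} = W(Z/2)`: its coboundary
(computed by the Leibniz rule) vanishes. -/
theorem v_is_cocycle (n : ℕ) (hn : n % 4 = 0) :
    (∑ r ∈ Finset.range (n / 4 + 1),
      (δm ((n : ℤ) / 2 - 2 * r - 1) * Em ((n : ℤ) / 2 + 2 * r + 1)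
        + Em ((n : ℤ) / 2 - 2 * r - 1) * δm ((n : ℤ) / 2 + 2 * r + 1))) = 0 := by
  set q : ℕ := n / 4 with hq
  have hnz : (n:ℤ) = 4*(q:ℤ) := by
    have : n = 4*q := by omega
    exact_mod_cast congrArg (Nat.cast : ℕ → ℤ) this
  have hhalf : (n:ℤ)/2 = 2*(q:ℤ) := by omega
  have hstep : ∀ r ∈ Finset.range (q+1),
      δm ((n : ℤ) / 2 - 2 * r - 1) * Em ((n : ℤ) / 2 + 2 * r + 1)
        + Em ((n : ℤ) / 2 - 2 * r - 1) * δm ((n : ℤ) / 2 + 2 * r + 1)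
      = Hm (4*(q:ℤ)) (q+1+r) + Hm (4*(q:ℤ)) (q-r) := by
    intro r hrmem
    simp only [Finset.mem_range] at hrmem
    have hr : r ≤ q := by omega
    rw [hhalf, prodA q r hr, prodB q r hr]
  rw [Finset.sum_congr rfl hstep, Finset.sum_add_distrib]
  have e1 : ∑ r ∈ Finset.range (q+1), Hm (4*(q:ℤ)) (q-r)
      = ∑ k ∈ Finset.range (q+1), Hm (4*(q:ℤ)) k := by
    simpa using Finset.sum_range_reflect (fun j => Hm (4*(q:ℤ)) j) (q+1)
  have e2 : ∑ r ∈ Finset.range (q+1), Hm (4*(q:ℤ)) (q+1+r)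
      = ∑ k ∈ Finset.Ico (q+1) (2*q+2), Hm (4*(q:ℤ)) k := by
    rw [Finset.sum_Ico_eq_sum_range]
    exact Finset.sum_congr (by congr 1; omega) fun j _ => rfl
  rw [e1, e2, add_comm, Finset.sum_range_add_sum_Ico _ (by omega : q+1 ≤ 2*q+2)]
  exact Hsum q
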